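/- Let g₁, …, g_n be elements of a group G lying in pairwise distinct conjugacy classes, each of finite order, ordered so that order(g_i) ≤ order(g_j) for i ≤ j. Then the matrix (tr_{g_j}(p_{g_i}))_{1 ≤ i,j ≤ n} is lower triangular with nonzero diagonal entries, where tr_h sums coefficients over the conjugacy class of h and p_g = (1/d)Σ_{k=1}^d g^k for d = order(g). In particular this matrix is invertible. -/

import Mathlib

open scoped Classical

/-- The averaging element `p_g = (1/d) · Σ_{k=1}^{d} g^k` in the rational group algebra. -/
noncomputable def pIdem {G : Type*} [Group G] (g : G) (d : ℕ) : MonoidAlgebra ℚ G :=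
  (d : ℚ)⁻¹ • ∑ k ∈ Finset.Icc 1 d, MonoidAlgebra.of ℚ G (g ^ k)

/-- `tr_g(Σ c_γ γ) = Σ_{γ ∈ C(g)} c_γ`: the sum of the coefficients over the
conjugacy class of `g`. -/
noncomputable def trConj {G : Type*} [Group G] (g : G) (a : MonoidAlgebra ℚ G) : ℚ :=
  ∑ᶠ γ ∈ {γ : G | IsConj g γ}, a.coeff γ

lemma pIdem_apply {G : Type*} [Group G] (g : G) (d : ℕ) (γ : G) :
    (pIdem g d : MonoidAlgebra ℚ G).coeff γ
      = (d : ℚ)⁻¹ * ∑ k ∈ Finset.Icc 1 d, (if g ^ k = γ then (1:ℚ) else 0) := by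
  classical
  rw [pIdem]
  simp only [MonoidAlgebra.coeff_smul_apply, MonoidAlgebra.coeff_sum, Finsupp.finset_sum_apply,
    MonoidAlgebra.of_apply, MonoidAlgebra.coeff_single_apply, smul_eq_mul]

lemma pIdem_apply_nonneg {G : Type*} [Group G] (g : G) (d : ℕ) (γ : G) :
    0 ≤ (pIdem g d : MonoidAlgebra ℚ G).coeff γ := by
  rw [pIdem_apply]
  apply mul_nonneg (by positivity)
  apply Finset.sum_nonneg
  intro k _; split_ifs <;> norm_num

/-- For `g₁, …, g_n` in pairwise distinct conjugacy classes with strictly increasing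
finite orders, the matrix `(tr_{g_j}(p_{g_i}))` is lower triangular with nonzero
diagonal entries; in particular it is invertible. -/
theorem stmt_16 {G : Type*} [Group G] (n : ℕ) (g : Fin n → G) (d : Fin n → ℕ)
    (hpos : ∀ i, 0 < d i) (hord : ∀ i, orderOf (g i) = d i)
    (hconj : ∀ i j, i ≠ j → ¬ IsConj (g i) (g j))
    (hmono : StrictMono d) :
    (∀ i j, i < j →
      (Matrix.of fun i j : Fin n => trConj (g j) (pIdem (g i) (d i))) i j = 0) ∧
    (∀ i, (Matrix.of fun i j : Fin n => trConj (g j) (pIdem (g i) (d i))) i i ≠ 0) ∧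
    IsUnit (Matrix.of fun i j : Fin n => trConj (g j) (pIdem (g i) (d i))) := by
  classical
  have htri : ∀ i j, i < j →
      (Matrix.of fun i j : Fin n => trConj (g j) (pIdem (g i) (d i))) i j = 0 := by
    intro i j hij
    simp only [Matrix.of_apply]
    apply finsum_mem_of_eqOn_zero
    intro γ hγ
    simp only [Set.mem_setOf_eq] at hγ
    obtain ⟨c, hc⟩ := hγ
    have hoγ : orderOf γ = d j := by rw [← hc.orderOf_eq, hord]
    simp only [Pi.zero_apply, pIdem_apply]
    rw [Finset.sum_eq_zero, mul_zero]
    intro k _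
    rw [if_neg]
    intro hk
    have : orderOf γ ∣ d i := by
      rw [← hk]
      exact (orderOf_pow_dvd k).trans (by rw [hord])
    exact absurd (Nat.le_of_dvd (hpos i) (hoγ ▸ this)) (not_le.2 (hmono hij))
  have hdiag : ∀ i, 0 < trConj (g i) (pIdem (g i) (d i)) := by
    intro i
    have hfin : ({γ : G | IsConj (g i) γ} ∩ Function.support
        fun γ => (pIdem (g i) (d i) : MonoidAlgebra ℚ G).coeff γ).Finite :=
      Set.Finite.inter_of_right (pIdem (g i) (d i)).coeff.finite_support _
    rw [trConj, finsum_mem_eq_sum _ hfin]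
    have hdQ : (0:ℚ) < (d i : ℚ)⁻¹ := by
      have : (0:ℚ) < (d i : ℚ) := by exact_mod_cast hpos i
      positivity
    have hg_pos : 0 < (pIdem (g i) (d i) : MonoidAlgebra ℚ G).coeff (g i) := by
      rw [pIdem_apply]
      apply mul_pos hdQ
      have h1 : (1:ℕ) ∈ Finset.Icc 1 (d i) := by
        simp [Nat.one_le_iff_ne_zero, (hpos i).ne']
      calc (0:ℚ) < 1 := one_pos
        _ = (if (g i) ^ 1 = g i then (1:ℚ) else 0) := by simp
        _ ≤ _ := Finset.single_le_sum (f := fun k => if (g i) ^ k = g i then (1:ℚ) else 0)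
            (fun k _ => by split_ifs <;> norm_num) h1
    have hmem : g i ∈ hfin.toFinset := by
      simp only [Set.Finite.mem_toFinset, Set.mem_inter_iff, Set.mem_setOf_eq,
        Function.mem_support]
      exact ⟨IsConj.refl _, hg_pos.ne'⟩
    calc (0:ℚ) < (pIdem (g i) (d i) : MonoidAlgebra ℚ G).coeff (g i) := hg_pos
      _ ≤ _ := Finset.single_le_sum (f := fun γ => (pIdem (g i) (d i) : MonoidAlgebra ℚ G).coeff γ)
          (fun γ _ => pIdem_apply_nonneg _ _ _) hmem
  refine ⟨htri, fun i => (hdiag i).ne', ?_⟩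
  rw [Matrix.isUnit_iff_isUnit_det, Matrix.det_of_lowerTriangular _ (fun i j h => htri _ _ h),
    isUnit_iff_ne_zero]
  exact Finset.prod_ne_zero_iff.2 fun i _ => (hdiag i).ne'
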